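/- Let (S(t)) be a C₀-semigroup on H, let Q be a bounded self-adjoint nonnegative operator, assume ∫₀^∞ Σ_i |Q^{1/2}S(s)*e_i|² ds < ∞ for an orthonormal basis (e_i) of H, let Q∞x = ∫₀^∞ S(s)QS(s)*x ds, and let R be the unique bounded self-adjoint nonnegative operator with R² = Q∞. Then lim_{t→∞} S(t)Rx = 0 for every x ∈ H. -/

import Mathlib

/-!
STATEMENT 3.  Let (S(t)) be a C₀-semigroup on a separable real Hilbert space H, Q a
bounded self-adjoint nonnegative operator with square root Q^{1/2}, assume
∫₀^∞ Σ_i |Q^{1/2}S(s)*e_i|² ds < ∞ for an orthonormal basis (e_i), let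
Q∞x = ∫₀^∞ S(s)QS(s)*x ds and let R be the unique bounded self-adjoint nonnegative
operator with R² = Q∞.  Then lim_{t→∞} S(t)Rx = 0 for every x ∈ H.
-/

open MeasureTheory Filter Set ContinuousLinearMap
open scoped RealInnerProductSpace ENNReal

noncomputable section

variable {H : Type*} [NormedAddCommGroup H] [InnerProductSpace ℝ H] [CompleteSpace H]

lemma parseval_aux {ι : Type*} (b : HilbertBasis ι ℝ H) (z : H) :
    ∑' i, ⟪b i, z⟫ ^ 2 = ‖z‖ ^ 2 := by
  have h := b.tsum_inner_mul_inner z z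
  rw [real_inner_self_eq_norm_sq] at h
  rw [← h]
  congr 1; funext i
  rw [real_inner_comm z (b i)]; ring

lemma adjoint_norm_sq_le {ι : Type*} (b : HilbertBasis ι ℝ H) (T : H →L[ℝ] H)
    (hsum : Summable fun i => ‖T (b i)‖ ^ 2) (y : H) :
    ‖ContinuousLinearMap.adjoint T y‖ ^ 2 ≤ ‖y‖ ^ 2 * ∑' i, ‖T (b i)‖ ^ 2 := by
  set z := ContinuousLinearMap.adjoint T y with hz
  have hterm : ∀ i, ⟪b i, z⟫ ^ 2 ≤ ‖y‖ ^ 2 * ‖T (b i)‖ ^ 2 := by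
    intro i
    have h1 : ⟪b i, z⟫ = ⟪y, T (b i)⟫ := by
      rw [real_inner_comm, hz, ContinuousLinearMap.adjoint_inner_left]
    rw [h1]
    have h2 : |⟪y, T (b i)⟫| ≤ ‖y‖ * ‖T (b i)‖ := abs_real_inner_le_norm _ _
    calc ⟪y, T (b i)⟫ ^ 2 = |⟪y, T (b i)⟫| ^ 2 := (sq_abs _).symm
      _ ≤ (‖y‖ * ‖T (b i)‖) ^ 2 := by
          apply pow_le_pow_left₀ (abs_nonneg _) h2
      _ = ‖y‖ ^ 2 * ‖T (b i)‖ ^ 2 := by ring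
  have hsum1 : Summable fun i => ⟪b i, z⟫ ^ 2 := by
    have := b.orthonormal.inner_products_summable (x := z)
    refine this.congr fun i => ?_
    rw [Real.norm_eq_abs, sq_abs]
  calc ‖z‖ ^ 2 = ∑' i, ⟪b i, z⟫ ^ 2 := (parseval_aux b z).symm
    _ ≤ ∑' i, ‖y‖ ^ 2 * ‖T (b i)‖ ^ 2 := Summable.tsum_le_tsum hterm hsum1 (hsum.mul_left _)
    _ = ‖y‖ ^ 2 * ∑' i, ‖T (b i)‖ ^ 2 := tsum_mul_left

lemma norm_sq_le_hs {ι : Type*} (b : HilbertBasis ι ℝ H) (T : H →L[ℝ] H)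
    (hsum : Summable fun i => ‖T (b i)‖ ^ 2) (x : H) :
    ‖T x‖ ^ 2 ≤ ‖x‖ ^ 2 * ∑' i, ‖T (b i)‖ ^ 2 := by
  set M := ∑' i, ‖T (b i)‖ ^ 2 with hM
  have hM0 : 0 ≤ M := tsum_nonneg fun i => sq_nonneg _
  by_cases hTx : ‖T x‖ = 0
  · rw [hTx]
    have : (0:ℝ) ≤ ‖x‖ ^ 2 * M := mul_nonneg (sq_nonneg _) hM0
    simpa using this
  have hTxpos : 0 < ‖T x‖ := lt_of_le_of_ne (norm_nonneg _) (Ne.symm hTx)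
  have hadj : ‖ContinuousLinearMap.adjoint T (T x)‖ ≤ ‖T x‖ * Real.sqrt M := by
    have h := adjoint_norm_sq_le b T hsum (T x)
    calc ‖ContinuousLinearMap.adjoint T (T x)‖
        = Real.sqrt (‖ContinuousLinearMap.adjoint T (T x)‖ ^ 2) :=
          (Real.sqrt_sq (norm_nonneg _)).symm
      _ ≤ Real.sqrt (‖T x‖ ^ 2 * M) := Real.sqrt_le_sqrt h
      _ = ‖T x‖ * Real.sqrt M := by
          rw [Real.sqrt_mul (sq_nonneg _), Real.sqrt_sq (norm_nonneg _)]
  have h1 : ‖T x‖ ^ 2 ≤ ‖x‖ * (‖T x‖ * Real.sqrt M) := by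
    calc ‖T x‖ ^ 2 = ⟪T x, T x⟫ := (real_inner_self_eq_norm_sq _).symm
      _ = ⟪x, ContinuousLinearMap.adjoint T (T x)⟫ :=
          (ContinuousLinearMap.adjoint_inner_right T x (T x)).symm
      _ ≤ ‖x‖ * ‖ContinuousLinearMap.adjoint T (T x)‖ := real_inner_le_norm _ _
      _ ≤ ‖x‖ * (‖T x‖ * Real.sqrt M) := by
          exact mul_le_mul_of_nonneg_left hadj (norm_nonneg _)
  have h3 : ‖T x‖ ≤ ‖x‖ * Real.sqrt M := by nlinarith [hTxpos]
  calc ‖T x‖ ^ 2 ≤ (‖x‖ * Real.sqrt M) ^ 2 := by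
        apply pow_le_pow_left₀ (norm_nonneg _) h3
    _ = ‖x‖ ^ 2 * M := by rw [mul_pow, Real.sq_sqrt hM0]

lemma norm_sq_le_hs_ennreal {ι : Type*} (b : HilbertBasis ι ℝ H) (T : H →L[ℝ] H) (x : H) :
    (‖T x‖₊ : ℝ≥0∞) ^ 2 ≤ (‖x‖₊ : ℝ≥0∞) ^ 2 * ∑' i, (‖T (b i)‖₊ : ℝ≥0∞) ^ 2 := by
  by_cases htop : (∑' i, (‖T (b i)‖₊ : ℝ≥0∞) ^ 2) = ⊤
  · rcases eq_or_ne x 0 with h0 | h0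
    · simp [h0]
    · rw [htop, ENNReal.mul_top]
      · exact le_top
      · simp [pow_eq_zero_iff, h0]
  · have hcoe : ∀ v : H, ((‖v‖₊ : ℝ≥0∞)) ^ 2 = ENNReal.ofReal (‖v‖ ^ 2) := by
      intro v
      rw [← enorm_eq_nnnorm, ← ofReal_norm, ← ENNReal.ofReal_pow (norm_nonneg _)]
    have hsum : Summable fun i => ‖T (b i)‖ ^ 2 := by
      have h1 : (∑' i, ((‖T (b i)‖₊ ^ 2 : NNReal) : ℝ≥0∞)) ≠ ⊤ := by
        simpa [ENNReal.coe_pow] using htop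
      have h2 := ENNReal.tsum_coe_ne_top_iff_summable.mp h1
      have h3 : Summable fun i => ((‖T (b i)‖₊ ^ 2 : NNReal) : ℝ) := NNReal.summable_coe.mpr h2
      refine h3.congr fun i => ?_
      push_cast
      rfl
    have hts : (∑' i, (‖T (b i)‖₊ : ℝ≥0∞) ^ 2) = ENNReal.ofReal (∑' i, ‖T (b i)‖ ^ 2) := by
      rw [ENNReal.ofReal_tsum_of_nonneg (fun i => sq_nonneg _) hsum]
      congr 1; funext i; exact hcoe _
    rw [hcoe, hcoe, hts, ← ENNReal.ofReal_mul (sq_nonneg _)]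
    exact ENNReal.ofReal_le_ofReal (norm_sq_le_hs b T hsum x)

theorem statement3 {ι : Type*}
    (S : ℝ → H →L[ℝ] H)
    (hS0 : S 0 = 1)
    (hSadd : ∀ s t : ℝ, 0 ≤ s → 0 ≤ t → S (s + t) = (S s).comp (S t))
    (hScont : ∀ x : H, ContinuousOn (fun t => S t x) (Set.Ici 0))
    (Q sqrtQ : H →L[ℝ] H) (hQsa : IsSelfAdjoint Q) (hQnn : ∀ x : H, 0 ≤ ⟪Q x, x⟫)
    (hsqrt_sa : IsSelfAdjoint sqrtQ) (hsqrt_nn : ∀ x : H, 0 ≤ ⟪sqrtQ x, x⟫)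
    (hsqrt_sq : sqrtQ.comp sqrtQ = Q)
    -- (e_i) is an orthonormal basis of H
    (e : ι → H) (he : Orthonormal ℝ e)
    (he_tot : Dense ((Submodule.span ℝ (Set.range e) : Submodule ℝ H) : Set H))
    -- Hypothesis: ∫₀^∞ Σ_i |Q^{1/2}S(s)*e_i|² ds < ∞
    (hint : (∫⁻ s in Set.Ioi (0:ℝ),
        ∑' i : ι, (‖sqrtQ (ContinuousLinearMap.adjoint (S s) (e i))‖₊ : ℝ≥0∞) ^ 2) < ⊤)
    -- R is the (unique) bounded self-adjoint nonnegative operator with R² = Q∞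
    (R : H →L[ℝ] H) (hRsa : IsSelfAdjoint R) (hRnn : ∀ x : H, 0 ≤ ⟪R x, x⟫)
    (hR2 : ∀ x : H,
      R (R x) = ∫ s in Set.Ioi (0:ℝ), S s (Q (ContinuousLinearMap.adjoint (S s) x))) :
    ∀ x : H, Filter.Tendsto (fun t : ℝ => S t (R x)) Filter.atTop (nhds 0) := by
  classical
  -- the Hilbert basis
  have htb : ⊤ ≤ (Submodule.span ℝ (Set.range e)).topologicalClosure := by
    rw [Submodule.dense_iff_topologicalClosure_eq_top.mp he_tot]
  set b : HilbertBasis ι ℝ H := HilbertBasis.mk he htb with hbdef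
  have hbe : ∀ i, b i = e i := by
    intro i
    rw [hbdef]
    exact congrFun (HilbertBasis.coe_mk he htb) i
  set K : ℝ → ℝ≥0∞ :=
    fun s => ∑' i : ι, (‖sqrtQ (ContinuousLinearMap.adjoint (S s) (e i))‖₊ : ℝ≥0∞) ^ 2 with hKdef
  set ρ : ℝ → ℝ≥0∞ := fun t => ∫⁻ s in Set.Ioi t, K s with hρdef
  have hρ0 : ρ 0 ≠ ⊤ := hint.ne
  have hρ_anti : ∀ t u : ℝ, t ≤ u → ρ u ≤ ρ t := by
    intro t u htu
    exact lintegral_mono' (Measure.restrict_mono (Ioi_subset_Ioi htu) le_rfl) le_rfl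
  have hρfin : ∀ t : ℝ, 0 ≤ t → ρ t ≠ ⊤ := fun t ht => ((hρ_anti 0 t ht).trans_lt hint).ne
  -- adjoint semigroup property
  have hadj : ∀ t s : ℝ, 0 ≤ t → 0 ≤ s → ∀ y : H,
      ContinuousLinearMap.adjoint (S s) (ContinuousLinearMap.adjoint (S t) y)
        = ContinuousLinearMap.adjoint (S (t + s)) y := by
    intro t s ht hs y
    rw [hSadd t s ht hs, ContinuousLinearMap.adjoint_comp]
    rfl
  -- pointwise Hilbert–Schmidt bound
  have hpt : ∀ (u : ℝ) (y : H),
      (‖sqrtQ (ContinuousLinearMap.adjoint (S u) y)‖₊ : ℝ≥0∞) ^ 2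
        ≤ (‖y‖₊ : ℝ≥0∞) ^ 2 * K u := by
    intro u y
    have h := norm_sq_le_hs_ennreal b (sqrtQ.comp (ContinuousLinearMap.adjoint (S u))) y
    simpa [hbe, hKdef] using h
  -- self-adjointness moves
  have hR_adj : ContinuousLinearMap.adjoint R = R := ContinuousLinearMap.isSelfAdjoint_iff'.mp hRsa
  have hsqrt_adj : ContinuousLinearMap.adjoint sqrtQ = sqrtQ :=
    ContinuousLinearMap.isSelfAdjoint_iff'.mp hsqrt_sa
  have hRmove : ∀ u v : H, ⟪R u, v⟫ = ⟪u, R v⟫ := by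
    intro u v
    rw [← hR_adj, ContinuousLinearMap.adjoint_inner_left, hR_adj]
  -- change of variables
  have hcv : ∀ t : ℝ, (∫⁻ s in Set.Ioi (0:ℝ), K (t + s)) = ρ t := by
    intro t
    have hemb : MeasurableEmbedding (fun s : ℝ => t + s) :=
      (MeasurableEquiv.addLeft t).measurableEmbedding
    have hmap : Measure.map (fun s : ℝ => t + s) (volume.restrict (Set.Ioi (0:ℝ)))
        = volume.restrict (Set.Ioi t) := by
      have h1 : (fun s : ℝ => t + s) ⁻¹' Set.Ioi t = Set.Ioi (0:ℝ) := by
        ext s; simp [Set.mem_Ioi]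
      rw [← h1, ← Measure.restrict_map hemb.measurable measurableSet_Ioi,
        (measurePreserving_add_left volume t).map_eq]
    rw [hρdef]
    dsimp only
    rw [← hmap, hemb.lintegral_map]
  -- main estimate
  have main : ∀ t : ℝ, 0 ≤ t → ∀ y : H,
      ‖R (ContinuousLinearMap.adjoint (S t) y)‖ ^ 2 ≤ ‖y‖ ^ 2 * (ρ t).toReal := by
    intro t ht y
    set z := ContinuousLinearMap.adjoint (S t) y with hz
    have hRz : ‖R z‖ ^ 2 = ⟪R (R z), z⟫ := by
      rw [← real_inner_self_eq_norm_sq, hRmove (R z) z]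
    by_cases hInt : Integrable
        (fun s => S s (Q (ContinuousLinearMap.adjoint (S s) z)))
        (volume.restrict (Set.Ioi (0:ℝ)))
    · have hg_eq : ∀ s : ℝ,
          ⟪S s (Q (ContinuousLinearMap.adjoint (S s) z)), z⟫
            = ‖sqrtQ (ContinuousLinearMap.adjoint (S s) z)‖ ^ 2 := by
        intro s
        set w := ContinuousLinearMap.adjoint (S s) z with hw
        have h1 : ⟪S s (Q w), z⟫ = ⟪Q w, w⟫ := by
          rw [real_inner_comm, ContinuousLinearMap.adjoint_inner_right, real_inner_comm, hw]
        have h2 : Q w = sqrtQ (sqrtQ w) := by rw [← hsqrt_sq]; rfl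
        rw [h1, h2, ← real_inner_self_eq_norm_sq]
        rw [← hsqrt_adj, ContinuousLinearMap.adjoint_inner_left, hsqrt_adj]
      have key : ⟪R (R z), z⟫
          = ∫ s in Set.Ioi (0:ℝ), ⟪S s (Q (ContinuousLinearMap.adjoint (S s) z)), z⟫ := by
        rw [hR2 z, real_inner_comm, ← integral_inner hInt z]
        congr 1; funext s; rw [real_inner_comm]
      have hg_nn : ∀ s : ℝ,
          0 ≤ ⟪S s (Q (ContinuousLinearMap.adjoint (S s) z)), z⟫ := by
        intro s; rw [hg_eq s]; exact sq_nonneg _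
      have hAESM : AEStronglyMeasurable
          (fun s => ⟪S s (Q (ContinuousLinearMap.adjoint (S s) z)), z⟫)
          (volume.restrict (Set.Ioi (0:ℝ))) :=
        AEStronglyMeasurable.inner hInt.aestronglyMeasurable aestronglyMeasurable_const
      rw [hRz, key,
        integral_eq_lintegral_of_nonneg_ae (Eventually.of_forall hg_nn) hAESM]
      have hb1 : (∫⁻ s in Set.Ioi (0:ℝ),
          ENNReal.ofReal (⟪S s (Q (ContinuousLinearMap.adjoint (S s) z)), z⟫))
            ≤ (‖y‖₊ : ℝ≥0∞) ^ 2 * ρ t := by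
        have hptw : ∀ᵐ s ∂(volume.restrict (Set.Ioi (0:ℝ))),
            ENNReal.ofReal (⟪S s (Q (ContinuousLinearMap.adjoint (S s) z)), z⟫)
              ≤ (‖y‖₊ : ℝ≥0∞) ^ 2 * K (t + s) := by
          rw [ae_restrict_iff' measurableSet_Ioi]
          refine Eventually.of_forall fun s hs => ?_
          rw [hg_eq s, hz, hadj t s ht (le_of_lt hs) y]
          have hofr : ENNReal.ofReal
              (‖sqrtQ (ContinuousLinearMap.adjoint (S (t + s)) y)‖ ^ 2)
              = (‖sqrtQ (ContinuousLinearMap.adjoint (S (t + s)) y)‖₊ : ℝ≥0∞) ^ 2 := by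
            rw [← enorm_eq_nnnorm, ← ofReal_norm, ← ENNReal.ofReal_pow (norm_nonneg _)]
          rw [hofr]
          exact hpt (t + s) y
        calc (∫⁻ s in Set.Ioi (0:ℝ),
            ENNReal.ofReal (⟪S s (Q (ContinuousLinearMap.adjoint (S s) z)), z⟫))
            ≤ ∫⁻ s in Set.Ioi (0:ℝ), (‖y‖₊ : ℝ≥0∞) ^ 2 * K (t + s) := lintegral_mono_ae hptw
          _ = (‖y‖₊ : ℝ≥0∞) ^ 2 * ∫⁻ s in Set.Ioi (0:ℝ), K (t + s) := by
              rw [lintegral_const_mul' _ _ (by simp : ((‖y‖₊ : ℝ≥0∞) ^ 2) ≠ ⊤)]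
          _ = (‖y‖₊ : ℝ≥0∞) ^ 2 * ρ t := by rw [hcv t]
      have hne : (‖y‖₊ : ℝ≥0∞) ^ 2 * ρ t ≠ ⊤ :=
        ENNReal.mul_ne_top (by simp) (hρfin t ht)
      calc (∫⁻ s in Set.Ioi (0:ℝ),
          ENNReal.ofReal (⟪S s (Q (ContinuousLinearMap.adjoint (S s) z)), z⟫)).toReal
          ≤ ((‖y‖₊ : ℝ≥0∞) ^ 2 * ρ t).toReal := ENNReal.toReal_mono hne hb1
        _ = ‖y‖ ^ 2 * (ρ t).toReal := by
            rw [ENNReal.toReal_mul]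
            simp [ENNReal.toReal_pow]
    · rw [hRz, hR2 z, integral_undef hInt]
      simp only [inner_zero_left]
      exact mul_nonneg (sq_nonneg _) ENNReal.toReal_nonneg
  -- decomposition of the tail integral
  set c : ℕ → ℝ≥0∞ := fun k => ∫⁻ s in Set.Ioc ((k:ℝ)) ((k:ℝ)+1), K s with hcdef
  have hdecomp : ∀ n : ℕ, ρ ((n:ℕ):ℝ) = ∑' m : ℕ, c (n + m) := by
    intro n
    have hset : Set.Ioi ((n:ℝ)) = ⋃ m : ℕ, Set.Ioc (((n + m : ℕ) : ℝ)) (((n + m : ℕ) : ℝ) + 1) := by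
      ext x
      simp only [Set.mem_Ioi, Set.mem_iUnion, Set.mem_Ioc]
      constructor
      · intro hx
        have h1 : 1 ≤ ⌈x - (n:ℝ)⌉₊ := Nat.one_le_ceil_iff.mpr (by linarith)
        have h2 : ((⌈x - (n:ℝ)⌉₊ : ℝ)) < (x - n) + 1 := Nat.ceil_lt_add_one (by linarith)
        have h3 : x - (n:ℝ) ≤ ⌈x - (n:ℝ)⌉₊ := Nat.le_ceil _
        refine ⟨⌈x - (n:ℝ)⌉₊ - 1, ?_, ?_⟩
        · push_cast [h1]
          linarith
        · push_cast [h1]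
          linarith
      · rintro ⟨m, h1, h2⟩
        have : (n:ℝ) ≤ ((n + m : ℕ) : ℝ) := by push_cast; linarith [(Nat.cast_nonneg m : (0:ℝ) ≤ (m:ℝ))]
        linarith
    have hcast : ∀ a b : ℕ, a < b → ((n + a : ℕ) : ℝ) + 1 ≤ ((n + b : ℕ) : ℝ) := by
      intro a b hab
      have : (a:ℝ) + 1 ≤ (b:ℝ) := by exact_mod_cast hab
      push_cast
      linarith
    have hdisj : Pairwise (Function.onFun Disjoint
        fun m : ℕ => Set.Ioc (((n + m : ℕ) : ℝ)) (((n + m : ℕ) : ℝ) + 1)) := by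
      intro m m' hmm
      simp only [Function.onFun]
      rw [Set.Ioc_disjoint_Ioc]
      rcases lt_or_gt_of_ne hmm with h | h
      · calc min (((n+m:ℕ):ℝ)+1) (((n+m':ℕ):ℝ)+1) ≤ ((n+m:ℕ):ℝ)+1 := min_le_left _ _
          _ ≤ ((n+m':ℕ):ℝ) := hcast m m' h
          _ ≤ max (((n+m:ℕ):ℝ)) (((n+m':ℕ):ℝ)) := le_max_right _ _
      · calc min (((n+m:ℕ):ℝ)+1) (((n+m':ℕ):ℝ)+1) ≤ ((n+m':ℕ):ℝ)+1 := min_le_right _ _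
          _ ≤ ((n+m:ℕ):ℝ) := hcast m' m h
          _ ≤ max (((n+m:ℕ):ℝ)) (((n+m':ℕ):ℝ)) := le_max_left _ _
    rw [hρdef]
    dsimp only
    rw [hset, Measure.restrict_iUnion hdisj (fun m => measurableSet_Ioc),
      lintegral_sum_measure]
  have hsum_ne : (∑' k : ℕ, c k) ≠ ⊤ := by
    have h0 := hdecomp 0
    simp only [Nat.cast_zero, zero_add] at h0
    rw [← h0]
    exact hρ0
  have hρnat : Tendsto (fun n : ℕ => ρ ((n:ℕ):ℝ)) atTop (nhds (0:ℝ≥0∞)) := by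
    have h := ENNReal.tendsto_sum_nat_add c hsum_ne
    refine h.congr fun n => ?_
    rw [hdecomp n]
    exact tsum_congr fun m => by rw [add_comm]
  have hρtend : Tendsto ρ atTop (nhds (0:ℝ≥0∞)) := by
    apply tendsto_of_tendsto_of_tendsto_of_le_of_le' tendsto_const_nhds
      (hρnat.comp tendsto_nat_floor_atTop)
    · exact Eventually.of_forall fun t => zero_le
    · filter_upwards [eventually_ge_atTop (0:ℝ)] with t ht
      exact hρ_anti _ _ (Nat.floor_le ht)
  have htoReal : Tendsto (fun t => (ρ t).toReal) atTop (nhds (0:ℝ)) := by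
    have h := (ENNReal.tendsto_toReal (a := 0) (by simp)).comp hρtend
    simpa [Function.comp_def] using h
  -- conclusion
  intro x
  rw [tendsto_zero_iff_norm_tendsto_zero]
  have hbound : ∀ t : ℝ, 0 ≤ t → ‖S t (R x)‖ ≤ ‖x‖ * Real.sqrt ((ρ t).toReal) := by
    intro t ht
    set y := S t (R x) with hy
    by_cases hy0 : ‖y‖ = 0
    · rw [hy0]
      positivity
    have hypos : 0 < ‖y‖ := lt_of_le_of_ne (norm_nonneg _) (Ne.symm hy0)
    have h2 : ‖R (ContinuousLinearMap.adjoint (S t) y)‖ ≤ ‖y‖ * Real.sqrt ((ρ t).toReal) := by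
      have h := main t ht y
      calc ‖R (ContinuousLinearMap.adjoint (S t) y)‖
          = Real.sqrt (‖R (ContinuousLinearMap.adjoint (S t) y)‖ ^ 2) :=
            (Real.sqrt_sq (norm_nonneg _)).symm
        _ ≤ Real.sqrt (‖y‖ ^ 2 * (ρ t).toReal) := Real.sqrt_le_sqrt h
        _ = ‖y‖ * Real.sqrt ((ρ t).toReal) := by
            rw [Real.sqrt_mul (sq_nonneg _), Real.sqrt_sq (norm_nonneg _)]
    have h1 : ‖y‖ ^ 2 ≤ ‖x‖ * (‖y‖ * Real.sqrt ((ρ t).toReal)) := by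
      calc ‖y‖ ^ 2 = ⟪y, y⟫ := (real_inner_self_eq_norm_sq _).symm
        _ = ⟪S t (R x), y⟫ := by rw [hy]
        _ = ⟪R x, ContinuousLinearMap.adjoint (S t) y⟫ :=
            (ContinuousLinearMap.adjoint_inner_right (S t) (R x) y).symm
        _ = ⟪x, R (ContinuousLinearMap.adjoint (S t) y)⟫ := hRmove x _
        _ ≤ ‖x‖ * ‖R (ContinuousLinearMap.adjoint (S t) y)‖ := real_inner_le_norm _ _
        _ ≤ ‖x‖ * (‖y‖ * Real.sqrt ((ρ t).toReal)) :=
            mul_le_mul_of_nonneg_left h2 (norm_nonneg _)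
    nlinarith [hypos, Real.sqrt_nonneg ((ρ t).toReal), norm_nonneg x]
  have hlim : Tendsto (fun t : ℝ => ‖x‖ * Real.sqrt ((ρ t).toReal)) atTop (nhds (0:ℝ)) := by
    have hsq : Tendsto (fun t : ℝ => Real.sqrt ((ρ t).toReal)) atTop (nhds (0:ℝ)) := by
      have := (Real.continuous_sqrt.tendsto 0).comp htoReal
      simpa [Function.comp_def] using this
    simpa using hsq.const_mul ‖x‖
  refine squeeze_zero' (Eventually.of_forall fun t => norm_nonneg _) ?_ hlim
  filter_upwards [eventually_ge_atTop (0:ℝ)] with t ht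
  exact hbound t ht
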